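/- Recovery of the Minkowski metric from path valuation: let x, y ∈ ℝⁿ (n ≥ 2) with y − x ∈ Λ = {v : v₀ ≥ ‖v⃗‖}. Then the supremum, over all continuously differentiable causal paths a : [0,1] → ℝⁿ with a(0) = x, a(1) = y and a'(t) ∈ Λ for all t, of the proper elapsed time ∫₀¹ γ̲(a'(t)) dt equals γ̲(y − x) = √(((y−x)₀)² − ‖(y−x)⃗‖²), and this supremum is attained by the straight-line path a(t) = x + t(y − x). -/

import Mathlib

open Finset

/-- Euclidean norm of the spatial part `v⃗ = (v₁, …, v_{n+1})` of a vector in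
the standard Lorentz vector space `ℝ^{n+2}` (so the dimension is `≥ 2`). -/
noncomputable def sNorm {n : ℕ} (v : Fin (n + 2) → ℝ) : ℝ :=
  Real.sqrt (∑ i ∈ univ.filter (fun i : Fin (n + 2) => i ≠ 0), (v i) ^ 2)

/-- The closed future cone `Λ = {v : v₀ ≥ ‖v⃗‖}`. -/
def Lam {n : ℕ} : Set (Fin (n + 2) → ℝ) := {v | sNorm v ≤ v 0}

/-- The Lorentz antinorm `γ̲(v) = √(v₀² − ‖v⃗‖²)`, defined and nonnegative on `Λ`. -/
noncomputable def anorm {n : ℕ} (v : Fin (n + 2) → ℝ) : ℝ :=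
  Real.sqrt ((v 0) ^ 2 - (sNorm v) ^ 2)

/-- Minkowski pairing. -/
noncomputable def mpair {n : ℕ} (u v : Fin (n + 2) → ℝ) : ℝ :=
  u 0 * v 0 - ∑ i ∈ univ.filter (fun i : Fin (n + 2) => i ≠ 0), u i * v i

lemma sNorm_nonneg {n : ℕ} (v : Fin (n + 2) → ℝ) : 0 ≤ sNorm v := Real.sqrt_nonneg _

lemma sNorm_sq {n : ℕ} (v : Fin (n + 2) → ℝ) :
    (sNorm v) ^ 2 = ∑ i ∈ univ.filter (fun i : Fin (n + 2) => i ≠ 0), (v i) ^ 2 :=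
  Real.sq_sqrt (Finset.sum_nonneg fun _ _ => sq_nonneg _)

lemma anorm_nonneg {n : ℕ} (v : Fin (n + 2) → ℝ) : 0 ≤ anorm v := Real.sqrt_nonneg _

/-- Reverse Cauchy–Schwarz inequality on the cone. -/
lemma anorm_mul_anorm_le_mpair {n : ℕ} (u v : Fin (n + 2) → ℝ)
    (hu : u ∈ Lam) (hv : v ∈ Lam) : anorm u * anorm v ≤ mpair u v := by
  have hCS := Finset.sum_mul_sq_le_sq_mul_sq
    (univ.filter (fun i : Fin (n + 2) => i ≠ 0)) u v
  have hu' : sNorm u ≤ u 0 := hu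
  have hv' : sNorm v ≤ v 0 := hv
  have hun := sNorm_nonneg u
  have hvn := sNorm_nonneg v
  rw [← sNorm_sq, ← sNorm_sq] at hCS
  have hC : ∑ i ∈ univ.filter (fun i : Fin (n + 2) => i ≠ 0), u i * v i
      ≤ sNorm u * sNorm v := by
    nlinarith [mul_nonneg hun hvn]
  have h1 : 0 ≤ u 0 * v 0 - sNorm u * sNorm v := by nlinarith
  have h2 : mpair u v ≥ u 0 * v 0 - sNorm u * sNorm v := by
    unfold mpair; linarith
  have key : (u 0 ^ 2 - sNorm u ^ 2) * (v 0 ^ 2 - sNorm v ^ 2) ≤ (mpair u v) ^ 2 := by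
    nlinarith [sq_nonneg (u 0 * sNorm v - v 0 * sNorm u)]
  have hmp : 0 ≤ mpair u v := by linarith
  calc anorm u * anorm v
      = Real.sqrt ((u 0 ^ 2 - sNorm u ^ 2) * (v 0 ^ 2 - sNorm v ^ 2)) := by
        unfold anorm; rw [Real.sqrt_mul (by nlinarith)]
    _ ≤ Real.sqrt ((mpair u v) ^ 2) := Real.sqrt_le_sqrt key
    _ = mpair u v := by rw [Real.sqrt_sq hmp]

lemma continuous_anorm {n : ℕ} : Continuous (fun v : Fin (n + 2) → ℝ => anorm v) := by
  unfold anorm sNorm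
  fun_prop

lemma continuous_mpair {n : ℕ} (u : Fin (n + 2) → ℝ) :
    Continuous (fun v : Fin (n + 2) → ℝ => mpair u v) := by
  unfold mpair
  fun_prop

/-- FTC for the Minkowski pairing along a path. -/
lemma integral_mpair {n : ℕ} (u : Fin (n + 2) → ℝ) (a a' : ℝ → (Fin (n + 2) → ℝ))
    (ha : ∀ t ∈ Set.Icc (0 : ℝ) 1, HasDerivAt a (a' t) t)
    (ha' : ContinuousOn a' (Set.Icc (0 : ℝ) 1)) :
    ∫ t in (0 : ℝ)..1, mpair u (a' t) = mpair u (a 1 - a 0) := by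
  have hcomp : ∀ i : Fin (n + 2), ∀ t ∈ Set.Icc (0 : ℝ) 1,
      HasDerivAt (fun s => a s i) (a' t i) t := by
    intro i t ht
    exact (ContinuousLinearMap.proj (R := ℝ)
      (φ := fun _ : Fin (n+2) => ℝ) i).hasFDerivAt.comp_hasDerivAt t (ha t ht)
  have hder : ∀ t ∈ Set.uIcc (0 : ℝ) 1,
      HasDerivAt (fun s => mpair u (a s)) (mpair u (a' t)) t := by
    rw [Set.uIcc_of_le (by norm_num : (0:ℝ) ≤ 1)]
    intro t ht
    unfold mpair
    have h0 : HasDerivAt (fun s => u 0 * a s 0) (u 0 * a' t 0) t :=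
      (hcomp 0 t ht).const_mul _
    have hsum : HasDerivAt
        (fun s => ∑ i ∈ univ.filter (fun i : Fin (n + 2) => i ≠ 0), u i * a s i)
        (∑ i ∈ univ.filter (fun i : Fin (n + 2) => i ≠ 0), u i * a' t i) t :=
      HasDerivAt.fun_sum (fun i _ => (hcomp i t ht).const_mul _)
    exact h0.sub hsum
  have hint : IntervalIntegrable (fun t => mpair u (a' t)) MeasureTheory.volume 0 1 := by
    apply ContinuousOn.intervalIntegrable
    rw [Set.uIcc_of_le (by norm_num : (0:ℝ) ≤ 1)]
    exact (continuous_mpair u).comp_continuousOn ha'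
  rw [intervalIntegral.integral_eq_sub_of_hasDerivAt hder hint]
  unfold mpair
  simp only [Pi.sub_apply]
  have hs : ∑ i ∈ univ.filter (fun i : Fin (n + 2) => i ≠ 0), u i * (a 1 i - a 0 i)
      = (∑ i ∈ univ.filter (fun i : Fin (n + 2) => i ≠ 0), u i * a 1 i)
        - ∑ i ∈ univ.filter (fun i : Fin (n + 2) => i ≠ 0), u i * a 0 i := by
    rw [← Finset.sum_sub_distrib]
    exact Finset.sum_congr rfl fun i _ => by ring
  rw [hs]; ring

/-- recovery of the Minkowski metric from path valuation. For
`y − x ∈ Λ`, the supremum over all continuously differentiable causal paths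
from `x` to `y` of the proper elapsed time `∫₀¹ γ̲(a'(t)) dt` equals
`γ̲(y − x)`, and it is attained (witnessed by the straight-line path
`a t = x + t • (y − x)`); i.e. `γ̲(y − x)` is the greatest element of the set
of proper elapsed times of such paths. -/
theorem isGreatest_proper_time {n : ℕ} (x y : Fin (n + 2) → ℝ)
    (h : y - x ∈ Lam) :
    IsGreatest
      {T : ℝ | ∃ a a' : ℝ → (Fin (n + 2) → ℝ),
        (∀ t ∈ Set.Icc (0 : ℝ) 1, HasDerivAt a (a' t) t) ∧
        ContinuousOn a' (Set.Icc (0 : ℝ) 1) ∧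
        (∀ t ∈ Set.Icc (0 : ℝ) 1, a' t ∈ Lam) ∧
        a 0 = x ∧ a 1 = y ∧
        T = ∫ t in (0 : ℝ)..1, anorm (a' t)}
      (anorm (y - x))
    ∧ (anorm (y - x) = ∫ t in (0 : ℝ)..1,
        anorm (deriv (fun s : ℝ => x + s • (y - x)) t)) := by
  set v := y - x with hv
  have hline : ∀ t : ℝ, HasDerivAt (fun s : ℝ => x + s • v) v t := by
    intro t
    have h1 : HasDerivAt (fun s : ℝ => s • v) ((1 : ℝ) • v) t :=
      (hasDerivAt_id t).smul_const v
    simpa using h1.const_add x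
  have hderiv : ∀ t : ℝ, deriv (fun s : ℝ => x + s • v) t = v :=
    fun t => (hline t).deriv
  have hintconst : (∫ t in (0 : ℝ)..1, anorm v) = anorm v := by simp
  constructor
  · constructor
    · -- membership: straight-line path
      refine ⟨fun s => x + s • v, fun _ => v, fun t _ => hline t, continuousOn_const,
        fun _ _ => h, by simp, ?_, hintconst.symm⟩
      show x + (1 : ℝ) • v = y
      rw [one_smul, hv]
      abel
    · -- upper bound
      rintro T ⟨a, a', ha, ha', haL, ha0, ha1, hT⟩
      have hv0 : (0 : ℝ) ≤ v 0 := le_trans (sNorm_nonneg v) h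
      refine le_of_forall_pos_le_add ?_
      intro δ hδ
      set ε : ℝ := δ ^ 2 / (v 0 + 1) with hε
      have hεpos : 0 < ε := by positivity
      set u : Fin (n + 2) → ℝ := fun i => if i = 0 then v 0 + ε else v i with hu
      have hu0 : u 0 = v 0 + ε := by simp [hu]
      have hui : ∀ i : Fin (n + 2), i ≠ 0 → u i = v i := by
        intro i hi; simp [hu, hi]
      have hsN : sNorm u = sNorm v := by
        unfold sNorm
        congr 1
        exact Finset.sum_congr rfl fun i hi => by rw [hui i (by simpa using hi)]
      have huL : u ∈ Lam := by
        show sNorm u ≤ u 0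
        rw [hsN, hu0]
        exact le_trans h (by linarith)
      set P : ℝ := (v 0) ^ 2 - (sNorm v) ^ 2 with hP
      have hPnn : 0 ≤ P := by
        have := sNorm_nonneg v
        have hvl : sNorm v ≤ v 0 := h
        nlinarith
      have hanu : anorm u = Real.sqrt (P + (2 * ε * v 0 + ε ^ 2)) := by
        unfold anorm
        rw [hsN, hu0, hP]; ring_nf
      have hanupos : 0 < anorm u := by
        rw [hanu]
        apply Real.sqrt_pos.2
        nlinarith
      have hmpv : mpair u v = P + ε * v 0 := by
        unfold mpair
        have hss : ∑ i ∈ univ.filter (fun i : Fin (n + 2) => i ≠ 0), u i * v i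
            = ∑ i ∈ univ.filter (fun i : Fin (n + 2) => i ≠ 0), (v i) ^ 2 := by
          exact Finset.sum_congr rfl fun i hi => by
            rw [hui i (by simpa using hi)]; ring
        rw [hss, ← sNorm_sq, hu0, hP]; ring
      have hptwise : ∀ t ∈ Set.Icc (0 : ℝ) 1,
          anorm u * anorm (a' t) ≤ mpair u (a' t) := fun t ht =>
        anorm_mul_anorm_le_mpair u (a' t) huL (haL t ht)
      have hint1 : IntervalIntegrable (fun t => anorm u * anorm (a' t))
          MeasureTheory.volume 0 1 := by
        apply ContinuousOn.intervalIntegrable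
        rw [Set.uIcc_of_le (by norm_num : (0:ℝ) ≤ 1)]
        exact continuousOn_const.mul (continuous_anorm.comp_continuousOn ha')
      have hint2 : IntervalIntegrable (fun t => mpair u (a' t))
          MeasureTheory.volume 0 1 := by
        apply ContinuousOn.intervalIntegrable
        rw [Set.uIcc_of_le (by norm_num : (0:ℝ) ≤ 1)]
        exact (continuous_mpair u).comp_continuousOn ha'
      have hmono := intervalIntegral.integral_mono_on (by norm_num : (0:ℝ) ≤ 1)
        hint1 hint2 hptwise
      rw [intervalIntegral.integral_const_mul, integral_mpair u a a' ha ha'] at hmono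
      have hdiff : a 1 - a 0 = v := by rw [ha0, ha1]
      rw [hdiff, hmpv, ← hT] at hmono
      -- hmono : anorm u * T ≤ P + ε * v 0
      set Q : ℝ := P + ε * v 0 with hQdef
      have hQnn : 0 ≤ Q := by nlinarith
      have hsq : Real.sqrt Q ≤ anorm u := by
        rw [hanu]
        apply Real.sqrt_le_sqrt
        nlinarith
      have hTle : T ≤ Real.sqrt Q := by
        by_contra hc
        push_neg at hc
        have hsn : (0:ℝ) ≤ Real.sqrt Q := Real.sqrt_nonneg _
        have hTpos : 0 < T := lt_of_le_of_lt hsn hc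
        have h1 : anorm u * Real.sqrt Q < anorm u * T :=
          mul_lt_mul_of_pos_left hc hanupos
        have h2 : Real.sqrt Q * Real.sqrt Q ≤ anorm u * Real.sqrt Q :=
          mul_le_mul_of_nonneg_right hsq hsn
        have h3 : Real.sqrt Q * Real.sqrt Q = Q := Real.mul_self_sqrt hQnn
        linarith
      have hsplit : Real.sqrt Q ≤ anorm v + Real.sqrt (ε * v 0) := by
        have hE : 0 ≤ ε * v 0 := by positivity
        have hle : Q ≤ (anorm v + Real.sqrt (ε * v 0)) ^ 2 := by
          have hav : anorm v ^ 2 = P := Real.sq_sqrt hPnn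
          have hEv : Real.sqrt (ε * v 0) ^ 2 = ε * v 0 := Real.sq_sqrt hE
          nlinarith [anorm_nonneg v, Real.sqrt_nonneg (ε * v 0),
            mul_nonneg (anorm_nonneg v) (Real.sqrt_nonneg (ε * v 0))]
        calc Real.sqrt Q ≤ Real.sqrt ((anorm v + Real.sqrt (ε * v 0)) ^ 2) :=
              Real.sqrt_le_sqrt hle
          _ = anorm v + Real.sqrt (ε * v 0) := Real.sqrt_sq
              (add_nonneg (anorm_nonneg v) (Real.sqrt_nonneg _))
      have hεδ : Real.sqrt (ε * v 0) ≤ δ := by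
        have : ε * v 0 ≤ δ ^ 2 := by
          rw [hε]
          rw [div_mul_eq_mul_div, div_le_iff₀ (by linarith)]
          nlinarith
        calc Real.sqrt (ε * v 0) ≤ Real.sqrt (δ ^ 2) := Real.sqrt_le_sqrt this
          _ = δ := Real.sqrt_sq hδ.le
      linarith
  · rw [intervalIntegral.integral_congr (g := fun _ => anorm v) ?_]
    · exact hintconst.symm
    · intro t _
      simp [hderiv t]
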